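/- Let m and N be positive integers and let α ∈ S_m. Suppose α = c · r where c is a cycle, r is a permutation disjoint from c, and the support of c has ℓ elements. Then inverting the cycle c multiplies the value of the so(N)-weight system by (−1)^ℓ: w_{so(N)}(c⁻¹ · r) = (−1)^ℓ · w_{so(N)}(c · r). -/

import Mathlib

open scoped BigOperators

attribute [local instance 100] LieRing.ofAssociativeRing

/-- The standard generator `F i j = E_{i j} − E_{N+1−j, N+1−i}` of `so(N)`, viewed as an
`N × N` complex matrix (an element of `gl(N)`). -/
noncomputable def soF (N : ℕ) (i j : Fin N) : Matrix (Fin N) (Fin N) ℂ :=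
  Matrix.single i j 1 - Matrix.single j.rev i.rev 1

/-- The `so(N)`-weight system on a permutation `α` of `m` elements:
`w_{so(N)}(α) = ∑_{i : Fin m → Fin N} ι(F_{i 1, i (α 1)}) ⋯ ι(F_{i m, i (α m)})`,
an element of the universal enveloping algebra of `gl(N)`. -/
noncomputable def wso (m N : ℕ) (α : Equiv.Perm (Fin m)) :
    UniversalEnvelopingAlgebra ℂ (Matrix (Fin N) (Fin N) ℂ) :=
  ∑ i : Fin m → Fin N,
    ((List.finRange m).map fun k =>
      UniversalEnvelopingAlgebra.ι ℂ (soF N (i k) (i (α k)))).prod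

lemma soF_rev (N : ℕ) (i j : Fin N) : soF N j.rev i.rev = - soF N i j := by
  simp only [soF, Fin.rev_rev]
  abel

lemma perm_apply_inv_self {n : ℕ} (c : Equiv.Perm (Fin n)) (k : Fin n) : c (c⁻¹ k) = k := by
  simp

lemma perm_inv_apply_self {n : ℕ} (c : Equiv.Perm (Fin n)) (k : Fin n) : c⁻¹ (c k) = k := by
  simp

lemma prod_map_smul {ι A : Type*} [Ring A] [Algebra ℂ A] (l : List ι)
    (s : ι → ℂ) (f : ι → A) :
    (l.map fun k => s k • f k).prod = (l.map s).prod • (l.map f).prod := by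
  induction l with
  | nil => simp
  | cons a l ih =>
    simp only [List.map_cons, List.prod_cons, ih, smul_mul_assoc, mul_smul_comm, smul_smul]
    rw [mul_comm]

/-- Inverting a disjoint cycle `c` with `ℓ` legs multiplies the value of the
`so(N)`-weight system by `(−1)^ℓ`. -/
theorem wso_inv_cycle (m N : ℕ) (hm : 0 < m) (hN : 0 < N)
    (α c r : Equiv.Perm (Fin m)) (hc : c.IsCycle) (hdisj : c.Disjoint r)
    (hα : α = c * r) :
    wso m N (c⁻¹ * r) = ((-1 : ℂ) ^ c.support.card) • wso m N α := by
  classical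
  subst hα
  have hrfix : ∀ k, k ∈ c.support → r k = k := by
    intro k hk
    rcases hdisj k with h | h
    · exact absurd h (Equiv.Perm.mem_support.mp hk)
    · exact h
  have hrnot : ∀ k, k ∉ c.support → r k ∉ c.support := by
    intro k hk hk'
    rcases hdisj (r k) with h | h
    · exact Equiv.Perm.mem_support.mp hk' h
    · exact hk ((r.injective h) ▸ hk')
  have hinvmem : ∀ k, k ∈ c.support → c⁻¹ k ∈ c.support := by
    intro k hk
    rw [← Equiv.Perm.support_inv c] at hk ⊢
    exact (Equiv.Perm.apply_mem_support).mpr hk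
  -- the reindexing equivalence
  let e : (Fin m → Fin N) ≃ (Fin m → Fin N) :=
  { toFun := fun i k => if k ∈ c.support then (i (c k)).rev else i k
    invFun := fun j k => if k ∈ c.support then (j (c⁻¹ k)).rev else j k
    left_inv := by
      intro i
      funext k
      by_cases hk : k ∈ c.support
      · simp only [hk, if_pos, hinvmem k hk, perm_apply_inv_self, Fin.rev_rev]
      · simp only [hk, if_neg, if_false]
    right_inv := by
      intro j
      funext k
      by_cases hk : k ∈ c.support
      · have : c k ∈ c.support := (Equiv.Perm.apply_mem_support).mpr hk
        simp only [hk, if_pos, this, perm_inv_apply_self, Fin.rev_rev]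
      · simp only [hk, if_neg, if_false] }
  unfold wso
  rw [Finset.smul_sum]
  refine (Fintype.sum_equiv e _ _ ?_).symm
  intro i
  have hfac : ∀ k : Fin m,
      UniversalEnvelopingAlgebra.ι ℂ (soF N (e i k) (e i ((c⁻¹ * r) k)))
        = (if k ∈ c.support then (-1 : ℂ) else 1) •
          UniversalEnvelopingAlgebra.ι ℂ (soF N (i k) (i ((c * r) k))) := by
    intro k
    by_cases hk : k ∈ c.support
    · have hr : r k = k := hrfix k hk
      have h1 : (c⁻¹ * r) k = c⁻¹ k := by simp [Equiv.Perm.mul_apply, hr]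
      have h2 : (c * r) k = c k := by simp [Equiv.Perm.mul_apply, hr]
      have he1 : e i k = (i (c k)).rev := if_pos hk
      have he2 : e i ((c⁻¹ * r) k) = (i k).rev := by
        rw [h1]
        show (if c⁻¹ k ∈ c.support then (i (c (c⁻¹ k))).rev else i (c⁻¹ k)) = (i k).rev
        rw [if_pos (hinvmem k hk), perm_apply_inv_self]
      rw [he1, he2, h2, if_pos hk, soF_rev, map_neg, neg_one_smul]
    · have hrk : r k ∉ c.support := hrnot k hk
      have h1 : (c⁻¹ * r) k = r k := by
        simp only [Equiv.Perm.mul_apply]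
        rw [Equiv.Perm.inv_eq_iff_eq]
        exact (Equiv.Perm.notMem_support.mp hrk).symm
      have h2 : (c * r) k = r k := by
        simp only [Equiv.Perm.mul_apply]
        exact Equiv.Perm.notMem_support.mp hrk
      have he1 : e i k = i k := if_neg hk
      have he2 : e i ((c⁻¹ * r) k) = i (r k) := by rw [h1]; exact if_neg hrk
      rw [he1, he2, h2, if_neg hk, one_smul]
  calc ((-1 : ℂ) ^ c.support.card) •
        ((List.finRange m).map fun k =>
          UniversalEnvelopingAlgebra.ι ℂ (soF N (i k) (i ((c * r) k)))).prod
      = ((List.finRange m).map fun k =>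
          (if k ∈ c.support then (-1 : ℂ) else 1) •
            UniversalEnvelopingAlgebra.ι ℂ (soF N (i k) (i ((c * r) k)))).prod := by
        rw [prod_map_smul]
        congr 1
        rw [← Fin.prod_univ_def, Finset.prod_ite_mem, Finset.univ_inter,
          Finset.prod_const]
    _ = ((List.finRange m).map fun k =>
          UniversalEnvelopingAlgebra.ι ℂ (soF N (e i k) (e i ((c⁻¹ * r) k)))).prod := by
        congr 1
        exact List.map_congr_left fun k _ => (hfac k).symm
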